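/- Let n ≥ 2 be an integer and r > c > 0. Let β^NN be the unique β ∈ (0,1) with β·log(β·r/c) = 1 − β, and β^N the unique β ∈ (0,1) with n·β·log(β·r/c) = 1 − β. Then the ISP's equilibrium surplus is strictly higher in the non-neutral regime: n·r + n·c − 2·n·β^NN·r > r + n·c − (n+1)·β^N·r. -/
import Mathlib


/-- For `n ≥ 2` and `r > c > 0`, the ISP's equilibrium surplus is strictly higher in the
non-neutral regime than in the neutral regime. -/
theorem stmt_10 (n : ℕ) (hn : 2 ≤ n) (r c : ℝ) (hc : 0 < c) (hrc : c < r)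
    (βNN βN : ℝ)
    (hmemNN : βNN ∈ Set.Ioo (0 : ℝ) 1)
    (heqNN : βNN * Real.log (βNN * r / c) = 1 - βNN)
    (hmemN : βN ∈ Set.Ioo (0 : ℝ) 1)
    (heqN : (n : ℝ) * βN * Real.log (βN * r / c) = 1 - βN) :
    r + (n : ℝ) * c - ((n : ℝ) + 1) * βN * r <
      (n : ℝ) * r + (n : ℝ) * c - 2 * (n : ℝ) * βNN * r := by
  obtain ⟨hx0, hx1⟩ := hmemNN
  obtain ⟨hy0, hy1⟩ := hmemN
  set x := βNN
  set y := βN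
  have hr : (0:ℝ) < r := lt_trans hc hrc
  have hN : (2:ℝ) ≤ (n:ℝ) := by exact_mod_cast hn
  set N : ℝ := (n : ℝ) with hNdef
  -- logs decompose
  have hA : Real.log (x * r / c) = Real.log x + (Real.log r - Real.log c) := by
    rw [Real.log_div (by positivity) (ne_of_gt hc), Real.log_mul (ne_of_gt hx0) (ne_of_gt hr)]
    ring
  have hB : Real.log (y * r / c) = Real.log y + (Real.log r - Real.log c) := by
    rw [Real.log_div (by positivity) (ne_of_gt hc), Real.log_mul (ne_of_gt hy0) (ne_of_gt hr)]
    ring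
  -- log inequality : log(y/x) ≤ y/x - 1
  have hlog : Real.log y - Real.log x ≤ y / x - 1 := by
    have := Real.log_le_sub_one_of_pos (show (0:ℝ) < y / x by positivity)
    rwa [Real.log_div (ne_of_gt hy0) (ne_of_gt hx0)] at this
  -- multiply by x > 0 :  x * (log y - log x) ≤ y - x
  have hlog' : x * (Real.log y - Real.log x) ≤ y - x := by
    have h := mul_le_mul_of_nonneg_left hlog (le_of_lt hx0)
    have hx' : x * (y / x - 1) = y - x := by field_simp
    linarith [h, hx'.le, hx'.ge]
  -- key inequality: N*y*(1-x) - x*(1-y) ≥ N*y*(x-y)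
  have hkey : N * y * (1 - x) - x * (1 - y) ≥ N * y * (x - y) := by
    have h2 : N * y * (x * (Real.log y - Real.log x)) ≤ N * y * (y - x) := by
      have hNy : (0:ℝ) ≤ N * y := by positivity
      exact mul_le_mul_of_nonneg_left hlog' hNy
    have e1 : x * Real.log (x * r / c) = 1 - x := by
      simpa using heqNN
    have e2 : N * y * Real.log (y * r / c) = 1 - y := by
      simpa [hNdef] using heqN
    rw [hA] at e1
    rw [hB] at e2
    have e1' : N * y * (x * (Real.log x + (Real.log r - Real.log c))) = N * y * (1 - x) := by
      rw [e1]
    have e2' : x * (N * y * (Real.log y + (Real.log r - Real.log c))) = x * (1 - y) := by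
      rw [e2]
    nlinarith [h2, e1', e2']
  -- reduce to the polynomial inequality  2 N x < (N-1) + (N+1) y
  have hq : 0 < (N - 1) * (1 - y) ^ 2 := by
    have h1y : (0:ℝ) < 1 - y := by linarith
    have : (0:ℝ) < (1 - y) ^ 2 := pow_pos h1y 2
    nlinarith
  have hD : 0 < (2 * N - 1) * y + 1 := by nlinarith
  have hgoal : 2 * N * x < N - 1 + (N + 1) * y := by
    nlinarith [hkey, hq, hD, mul_pos hx0 hy0, hx0, hy0, hx1.le, hy1.le,
      mul_le_mul_of_nonneg_left hkey (le_of_lt hD)]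
  have := mul_lt_mul_of_pos_right hgoal hr
  nlinarith [this]
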